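/- Let F(φ) = φ ln(φ) + (1−φ) ln(1−φ) + θ(φ − φ²) for 0 < φ < 1, and for 0 < b < 1, 0 < a < 1, λ ≥ 0, define f(b,a) = ln(b) − ln(1−b) + (λ+1)·(a/b − (1−a)/(1−b)) + θ·(1 − a − b). Then F(a) − F(b) ≤ f(b,a)·(a − b). -/
import Mathlib


noncomputable def FH (θ φ : ℝ) : ℝ :=
  φ * Real.log φ + (1 - φ) * Real.log (1 - φ) + θ * (φ - φ ^ 2)

noncomputable def fchem (lam θ b a : ℝ) : ℝ :=
  Real.log b - Real.log (1 - b) + (lam + 1) * (a / b - (1 - a) / (1 - b)) + θ * (1 - a - b)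

theorem energy_factorization_FH (θ lam a b : ℝ) (hlam : 0 ≤ lam)
    (ha : a ∈ Set.Ioo (0:ℝ) 1) (hb : b ∈ Set.Ioo (0:ℝ) 1) :
    FH θ a - FH θ b ≤ fchem lam θ b a * (a - b) := by
  obtain ⟨ha0, ha1⟩ := ha
  obtain ⟨hb0, hb1⟩ := hb
  have ha1' : (0:ℝ) < 1 - a := by linarith
  have hb1' : (0:ℝ) < 1 - b := by linarith
  have k1 : Real.log a - Real.log b ≤ a / b - 1 := by
    have h := Real.log_le_sub_one_of_pos (div_pos ha0 hb0)
    rwa [Real.log_div (ne_of_gt ha0) (ne_of_gt hb0)] at h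
  have k2 : Real.log (1 - a) - Real.log (1 - b) ≤ (1 - a) / (1 - b) - 1 := by
    have h := Real.log_le_sub_one_of_pos (div_pos ha1' hb1')
    rwa [Real.log_div (ne_of_gt ha1') (ne_of_gt hb1')] at h
  have hbb : (0:ℝ) < b * (1 - b) := mul_pos hb0 hb1'
  have hS : (0:ℝ) ≤ (a - b) ^ 2 / (b * (1 - b)) := div_nonneg (sq_nonneg _) hbb.le
  have hD : (a / b - (1 - a) / (1 - b)) * (a - b) = (a - b) ^ 2 / (b * (1 - b)) := by
    field_simp
    ring
  have m1 : a * (Real.log a - Real.log b) ≤ a * (a / b - 1) :=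
    mul_le_mul_of_nonneg_left k1 ha0.le
  have m2 : (1 - a) * (Real.log (1 - a) - Real.log (1 - b)) ≤
      (1 - a) * ((1 - a) / (1 - b) - 1) :=
    mul_le_mul_of_nonneg_left k2 ha1'.le
  have hsum : a * (a / b - 1) + (1 - a) * ((1 - a) / (1 - b) - 1) =
      (a - b) ^ 2 / (b * (1 - b)) := by
    field_simp
    ring
  have hlamS : 0 ≤ lam * ((a - b) ^ 2 / (b * (1 - b))) := mul_nonneg hlam hS
  simp only [FH, fchem]
  nlinarith [m1, m2, hsum, hD, hlamS, sq_nonneg (a - b)]
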